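/- arXiv:1702.00622 — 2 statements merged into one kernel-verified Lean document; each statement's English description precedes it below -/
import Mathlib

section
/- Let G be a (2K2, K5 − e)-free graph. Then χ(G) ≤ ω(G) + 4. -/
open SimpleGraph

/-- `G` contains no induced subgraph isomorphic to `H` (graph embeddings are
exactly the inclusions of induced subgraphs). -/
def IndFree {W V : Type*} (H : SimpleGraph W) (G : SimpleGraph V) : Prop :=
  IsEmpty (H ↪g G)

/-- A set of vertices is independent if its elements are pairwise nonadjacent. -/
def IsIndep {V : Type*} (G : SimpleGraph V) (s : Set V) : Prop :=
  s.Pairwise fun u v => ¬ G.Adj u v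

/-- A graph is perfect if every induced subgraph has chromatic number equal to
its clique number. -/
def IsPerfect {V : Type*} (G : SimpleGraph V) : Prop :=
  ∀ S : Set V, (G.induce S).chromaticNumber = ((G.induce S).cliqueNum : ℕ∞)

/-- `2K₂`: two disjoint edges `{0,1}` and `{2,3}`. -/
def graph2K2 : SimpleGraph (Fin 4) :=
  SimpleGraph.fromRel (fun a b => (a = 0 ∧ b = 1) ∨ (a = 2 ∧ b = 3))

/-- The path `P₄`. -/
def graphP4 : SimpleGraph (Fin 4) :=
  SimpleGraph.fromRel (fun a b => (a = 0 ∧ b = 1) ∨ (a = 1 ∧ b = 2) ∨ (a = 2 ∧ b = 3))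

/-- The path `P₃`. -/
def graphP3 : SimpleGraph (Fin 3) :=
  SimpleGraph.fromRel (fun a b => (a = 0 ∧ b = 1) ∨ (a = 1 ∧ b = 2))

/-- `P₄ ∪ K₁`: a path on `{0,1,2,3}` plus the isolated vertex `4`. -/
def graphP4K1 : SimpleGraph (Fin 5) :=
  SimpleGraph.fromRel (fun a b => (a = 0 ∧ b = 1) ∨ (a = 1 ∧ b = 2) ∨ (a = 2 ∧ b = 3))

/-- The cycle `C₄`. -/
def graphC4 : SimpleGraph (Fin 4) :=
  SimpleGraph.fromRel
    (fun a b => (a = 0 ∧ b = 1) ∨ (a = 1 ∧ b = 2) ∨ (a = 2 ∧ b = 3) ∨ (a = 3 ∧ b = 0))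

/-- The gem `K₁ + P₄`: a path on `{0,1,2,3}` plus the universal vertex `4`. -/
def graphGem : SimpleGraph (Fin 5) :=
  SimpleGraph.fromRel
    (fun a b => (a = 0 ∧ b = 1) ∨ (a = 1 ∧ b = 2) ∨ (a = 2 ∧ b = 3) ∨ (a ≠ 4 ∧ b = 4))

/-- The wheel `K₁ + C₄`: a 4-cycle on `{0,1,2,3}` plus the universal vertex `4`. -/
def graphWheel : SimpleGraph (Fin 5) :=
  SimpleGraph.fromRel
    (fun a b => (a = 0 ∧ b = 1) ∨ (a = 1 ∧ b = 2) ∨ (a = 2 ∧ b = 3) ∨ (a = 3 ∧ b = 0) ∨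
      (a ≠ 4 ∧ b = 4))

/-- `P₂ ∪ P₃`: the edge `{0,1}` together with the path `2 - 3 - 4`. -/
def graphP2P3 : SimpleGraph (Fin 5) :=
  SimpleGraph.fromRel (fun a b => (a = 0 ∧ b = 1) ∨ (a = 2 ∧ b = 3) ∨ (a = 3 ∧ b = 4))

/-- `P₂ ∪ P₄`: the edge `{0,1}` together with the path `2 - 3 - 4 - 5`. -/
def graphP2P4 : SimpleGraph (Fin 6) :=
  SimpleGraph.fromRel
    (fun a b => (a = 0 ∧ b = 1) ∨ (a = 2 ∧ b = 3) ∨ (a = 3 ∧ b = 4) ∨ (a = 4 ∧ b = 5))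

/-- `HVN`: `K₄` on `{0,1,2,3}` plus a vertex `4` adjacent to exactly `0` and `1`. -/
def graphHVN : SimpleGraph (Fin 5) :=
  SimpleGraph.fromRel (fun a b => (a < 4 ∧ b < 4) ∨ (a = 4 ∧ (b = 0 ∨ b = 1)))

/-- `K₅ - e`: the complete graph on 5 vertices minus the edge `{0,1}`. -/
def graphK5e : SimpleGraph (Fin 5) :=
  SimpleGraph.fromRel (fun a b => ¬((a = 0 ∧ b = 1) ∨ (a = 1 ∧ b = 0)))

/-- The diamond `K₄ - e`: the complete graph on 4 vertices minus the edge `{0,2}`. -/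
def graphDiamond : SimpleGraph (Fin 4) :=
  SimpleGraph.fromRel (fun a b => ¬((a = 0 ∧ b = 2) ∨ (a = 2 ∧ b = 0)))

/-- The paw: a triangle `{0,1,2}` plus a pendant vertex `3` adjacent to `0`. -/
def graphPaw : SimpleGraph (Fin 4) :=
  SimpleGraph.fromRel
    (fun a b => (a = 0 ∧ b = 1) ∨ (a = 1 ∧ b = 2) ∨ (a = 0 ∧ b = 2) ∨ (a = 0 ∧ b = 3))

/-- `K₅`. -/
def graphK5 : SimpleGraph (Fin 5) := ⊤

/-- The join `K₁ + H`: `H` together with a new universal vertex `none`. -/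
def joinK1 {W : Type*} (H : SimpleGraph W) : SimpleGraph (Option W) :=
  SimpleGraph.fromRel
    (fun a b => (∃ u v, a = some u ∧ b = some v ∧ H.Adj u v) ∨ a = none)

/-- A pseudo-split graph is a `(2K₂, C₄)`-free graph. -/
def IsPseudoSplit {V : Type*} (G : SimpleGraph V) : Prop :=
  IndFree graph2K2 G ∧ IndFree graphC4 G

section Aux

lemma no2K2 {V : Type*} {G : SimpleGraph V} (h1 : IndFree graph2K2 G)
    {a b c d : V} (hab : G.Adj a b) (hcd : G.Adj c d)
    (hac : ¬G.Adj a c) (had : ¬G.Adj a d) (hbc : ¬G.Adj b c) (hbd : ¬G.Adj b d) : False := by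
  have hac' : a ≠ c := fun h => had (h ▸ hcd)
  have had' : a ≠ d := fun h => hac (h ▸ hcd.symm)
  have hbc' : b ≠ c := fun h => hbd (h ▸ hcd)
  have hbd' : b ≠ d := fun h => hbc (h ▸ hcd.symm)
  refine h1.elim ⟨⟨![a,b,c,d], ?_⟩, ?_⟩
  · intro i j hij
    fin_cases i <;> fin_cases j <;>
      simp_all [hab.ne, hcd.ne, hab.ne', hcd.ne', hac'.symm, had'.symm, hbc'.symm, hbd'.symm]
  · intro i j
    change G.Adj (![a,b,c,d] i) (![a,b,c,d] j) ↔ _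
    have h1 := hac; have h2 := had; have h3 := hbc; have h4 := hbd
    rw [G.adj_comm] at h1 h2 h3 h4
    fin_cases i <;> fin_cases j <;>
      simp_all [graph2K2, SimpleGraph.fromRel_adj, hab.symm, hcd.symm, G.irrefl, Function.Embedding.coeFn_mk]

lemma noK5e {V : Type*} {G : SimpleGraph V} (h2 : IndFree graphK5e G)
    {x y a b c : V} (hxy : x ≠ y) (hxy' : ¬G.Adj x y)
    (hab : G.Adj a b) (hac : G.Adj a c) (hbc : G.Adj b c)
    (hxa : G.Adj x a) (hxb : G.Adj x b) (hxc : G.Adj x c)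
    (hya : G.Adj y a) (hyb : G.Adj y b) (hyc : G.Adj y c) : False := by
  refine h2.elim ⟨⟨![x,y,a,b,c], ?_⟩, ?_⟩
  · intro i j hij
    fin_cases i <;> fin_cases j <;>
      simp_all [hxa.ne, hxb.ne, hxc.ne, hya.ne, hyb.ne, hyc.ne, hab.ne, hac.ne, hbc.ne,
        hxa.ne', hxb.ne', hxc.ne', hya.ne', hyb.ne', hyc.ne', hab.ne', hac.ne', hbc.ne']
  · intro i j
    change G.Adj (![x,y,a,b,c] i) (![x,y,a,b,c] j) ↔ _
    fin_cases i <;> fin_cases j <;>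
      simp_all [graphK5e, SimpleGraph.fromRel_adj, Function.Embedding.coeFn_mk, hab.symm, hac.symm, hbc.symm,
        hxa.symm, hxb.symm, hxc.symm, hya.symm, hyb.symm, hyc.symm, G.irrefl, hxy, hxy.symm,
        G.adj_comm x y]

noncomputable def traceF {V : Type*} [Fintype V] (G : SimpleGraph V) {k : ℕ}
    (v : Fin k → V) (u : V) : Finset (Fin k) := by
  classical exact Finset.univ.filter fun i => G.Adj u (v i)

lemma mem_traceF {V : Type*} [Fintype V] {G : SimpleGraph V} {k : ℕ}
    {v : Fin k → V} {u : V} {i : Fin k} : i ∈ traceF G v u ↔ G.Adj u (v i) := by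
  classical
  simp [traceF]

lemma exists_enum {V : Type*} [Fintype V] {G : SimpleGraph V} {k : ℕ} {s : Finset V}
    (hs : G.IsNClique k s) :
    ∃ v : Fin k → V, Function.Injective v ∧ (∀ i, v i ∈ s) ∧ (∀ x ∈ s, ∃ i, v i = x) ∧
      (∀ i j, i ≠ j → G.Adj (v i) (v j)) := by
  classical
  have hcard : s.card = k := hs.card_eq
  refine ⟨fun i => (s.equivFin.symm (Fin.cast hcard.symm i) : V), ?_, ?_, ?_, ?_⟩
  · intro i j hij
    have h2 := s.equivFin.symm.injective (Subtype.ext hij)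
    exact Fin.cast_injective _ h2
  · intro i; exact (s.equivFin.symm (Fin.cast hcard.symm i)).2
  · intro x hx
    refine ⟨Fin.cast hcard (s.equivFin ⟨x, hx⟩), ?_⟩
    simp
  · intro i j hij
    refine hs.isClique ?_ ?_ ?_
    · exact (s.equivFin.symm (Fin.cast hcard.symm i)).2
    · exact (s.equivFin.symm (Fin.cast hcard.symm j)).2
    · intro h
      exact hij (Fin.cast_injective _ (s.equivFin.symm.injective (Subtype.ext h)))

section Struct
variable {V : Type*} [Fintype V] {G : SimpleGraph V} {k : ℕ} {s : Finset V} {v : Fin k → V}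

lemma notall (hmax : ∀ t : Finset V, G.IsClique (t : Set V) → t.card ≤ k)
    (hscl : G.IsClique (s : Set V)) (hcard : s.card = k)
    (hsurj : ∀ x ∈ s, ∃ i, v i = x)
    {u : V} (hu : u ∉ s) (hT : traceF G v u = Finset.univ) : False := by
  classical
  have hcl : G.IsClique ((insert u s : Finset V) : Set V) := by
    rw [Finset.coe_insert]
    refine hscl.insert ?_
    intro b hb _
    obtain ⟨i, rfl⟩ := hsurj b hb
    exact mem_traceF.mp (hT ▸ Finset.mem_univ i)
  have := hmax _ hcl
  rw [Finset.card_insert_of_notMem hu, hcard] at this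
  omega

lemma trace2 (h2 : IndFree graphK5e G)
    (hmax : ∀ t : Finset V, G.IsClique (t : Set V) → t.card ≤ k)
    (hscl : G.IsClique (s : Set V)) (hcard : s.card = k)
    (hmem : ∀ i, v i ∈ s) (hsurj : ∀ x ∈ s, ∃ i, v i = x)
    (hadjv : ∀ i j, i ≠ j → G.Adj (v i) (v j))
    {u : V} (hu : u ∉ s) : (traceF G v u).card ≤ 2 := by
  classical
  by_contra hc
  push_neg at hc
  set T := traceF G v u with hTdef
  obtain ⟨i1, hi1⟩ := Finset.card_pos.mp (by omega : 0 < T.card)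
  have e2 : 0 < (T.erase i1).card := by
    rw [Finset.card_erase_of_mem hi1]; omega
  obtain ⟨i2, hi2⟩ := Finset.card_pos.mp e2
  have e3 : 0 < ((T.erase i1).erase i2).card := by
    rw [Finset.card_erase_of_mem hi2, Finset.card_erase_of_mem hi1]; omega
  obtain ⟨i3, hi3⟩ := Finset.card_pos.mp e3
  have hi2T : i2 ∈ T := Finset.mem_of_mem_erase hi2
  have hi3T : i3 ∈ T := Finset.mem_of_mem_erase (Finset.mem_of_mem_erase hi3)
  have h12 : i1 ≠ i2 := fun h => (Finset.ne_of_mem_erase hi2) h.symm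
  have h13 : i1 ≠ i3 := fun h => (Finset.ne_of_mem_erase (Finset.mem_of_mem_erase hi3)) h.symm
  have h23 : i2 ≠ i3 := fun h => (Finset.ne_of_mem_erase hi3) h.symm
  have hTne : T ≠ Finset.univ := fun h => notall hmax hscl hcard hsurj hu h
  obtain ⟨j, hj⟩ : ∃ j, j ∉ T := by
    by_contra hall; push_neg at hall
    exact hTne (Finset.eq_univ_iff_forall.mpr hall)
  have hj1 : j ≠ i1 := fun h => hj (h ▸ hi1)
  have hj2 : j ≠ i2 := fun h => hj (h ▸ hi2T)
  have hj3 : j ≠ i3 := fun h => hj (h ▸ hi3T)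
  exact noK5e h2 (x := u) (y := v j)
    (fun h => hu (h ▸ hmem j)) (fun h => hj (mem_traceF.mpr h))
    (hadjv i1 i2 h12) (hadjv i1 i3 h13) (hadjv i2 i3 h23)
    (mem_traceF.mp hi1) (mem_traceF.mp hi2T) (mem_traceF.mp hi3T)
    (hadjv j i1 hj1) (hadjv j i2 hj2) (hadjv j i3 hj3)

lemma union_big (h1 : IndFree graph2K2 G)
    (hadjv : ∀ i j, i ≠ j → G.Adj (v i) (v j))
    {u w : V} (huw : G.Adj u w) :
    (Finset.univ \ (traceF G v u ∪ traceF G v w)).card ≤ 1 := by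
  classical
  by_contra hc
  push_neg at hc
  obtain ⟨j1, hj1, j2, hj2, hne⟩ := Finset.one_lt_card.mp hc
  rw [Finset.mem_sdiff, Finset.mem_union] at hj1 hj2
  push_neg at hj1 hj2
  exact no2K2 h1 huw (hadjv j1 j2 hne)
    (fun h => hj1.2.1 (mem_traceF.mpr h)) (fun h => hj2.2.1 (mem_traceF.mpr h))
    (fun h => hj1.2.2 (mem_traceF.mpr h)) (fun h => hj2.2.2 (mem_traceF.mpr h))

lemma inter_small
    (hmax : ∀ t : Finset V, G.IsClique (t : Set V) → t.card ≤ k)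
    (hinj : Function.Injective v) (hmem : ∀ i, v i ∈ s)
    (hadjv : ∀ i j, i ≠ j → G.Adj (v i) (v j))
    {u w : V} (hu : u ∉ s) (hw : w ∉ s) (huw : G.Adj u w) :
    (traceF G v u ∩ traceF G v w).card + 2 ≤ k := by
  classical
  set P := (traceF G v u ∩ traceF G v w).image v with hP
  have hPs : ∀ x ∈ P, x ∈ s := by
    intro x hx
    obtain ⟨i, _, rfl⟩ := Finset.mem_image.mp hx
    exact hmem i
  have hcl : G.IsClique ((insert u (insert w P) : Finset V) : Set V) := by
    intro x hx y hy hxy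
    simp only [Finset.coe_insert, Set.mem_insert_iff, Finset.mem_coe] at hx hy
    have adjP : ∀ z ∈ P, G.Adj u z ∧ G.Adj w z := by
      intro z hz
      obtain ⟨i, hi, rfl⟩ := Finset.mem_image.mp hz
      rw [Finset.mem_inter] at hi
      exact ⟨mem_traceF.mp hi.1, mem_traceF.mp hi.2⟩
    have adjPP : ∀ z ∈ P, ∀ z' ∈ P, z ≠ z' → G.Adj z z' := by
      intro z hz z' hz' hzz
      obtain ⟨i, _, rfl⟩ := Finset.mem_image.mp hz
      obtain ⟨i', _, rfl⟩ := Finset.mem_image.mp hz'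
      exact hadjv i i' (fun h => hzz (congrArg v h))
    rcases hx with rfl | rfl | hx <;> rcases hy with rfl | rfl | hy
    · exact absurd rfl hxy
    · exact huw
    · exact (adjP _ hy).1
    · exact huw.symm
    · exact absurd rfl hxy
    · exact (adjP _ hy).2
    · exact (adjP _ hx).1.symm
    · exact (adjP _ hx).2.symm
    · exact adjPP _ hx _ hy hxy
  have hcard := hmax _ hcl
  have hwP : w ∉ P := fun h => hw (hPs _ h)
  have huP : u ∉ insert w P := by
    simp only [Finset.mem_insert]
    push_neg
    exact ⟨huw.ne, fun h => hu (hPs _ h)⟩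
  rw [Finset.card_insert_of_notMem huP, Finset.card_insert_of_notMem hwP, hP,
    Finset.card_image_of_injective _ hinj] at hcard
  omega

lemma assemble {n : ℕ}
    (v : Fin k → V) (hsurj : ∀ x ∈ s, ∃ i, v i = x)
    (f : Finset (Fin k) → ℕ)
    (hkn : k ≤ n)
    (hb : ∀ u, u ∉ s → f (traceF G v u) < n)
    (hP1 : ∀ u, u ∉ s → ∀ i : Fin k, i ∈ traceF G v u → f (traceF G v u) ≠ i.val)
    (hP2 : ∀ u w, u ∉ s → w ∉ s → G.Adj u w → f (traceF G v u) ≠ f (traceF G v w)) :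
    G.Colorable n := by
  classical
  rw [G.colorable_iff_exists_bdd_nat_coloring n]
  refine ⟨Coloring.mk
    (fun u => if h : u ∈ s then (Classical.choose (hsurj u h)).val else f (traceF G v u))
    ?_, ?_⟩
  · intro u w hadj
    by_cases hu : u ∈ s <;> by_cases hw : w ∈ s <;> simp only [dif_pos, dif_neg, hu, hw]
    · intro h
      have h2 : Classical.choose (hsurj u hu) = Classical.choose (hsurj w hw) := Fin.ext h
      have eu := Classical.choose_spec (hsurj u hu)
      have ew := Classical.choose_spec (hsurj w hw)
      exact hadj.ne (eu ▸ h2 ▸ ew)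
    · intro h
      have eu := Classical.choose_spec (hsurj u hu)
      refine hP1 w hw (Classical.choose (hsurj u hu)) ?_ h.symm
      exact mem_traceF.mpr (by rw [eu]; exact hadj.symm)
    · intro h
      have ew := Classical.choose_spec (hsurj w hw)
      refine hP1 u hu (Classical.choose (hsurj w hw)) ?_ h
      exact mem_traceF.mpr (by rw [ew]; exact hadj)
    · exact hP2 u w hu hw hadj
  · intro u
    show (if h : u ∈ s then (Classical.choose (hsurj u h)).val else f (traceF G v u)) < n
    by_cases hu : u ∈ s <;> simp only [dif_pos, dif_neg, hu]
    · exact lt_of_lt_of_le (Classical.choose (hsurj u hu)).isLt hkn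
    · exact hb u hu

end Struct

def ftab2 : Finset (Fin 2) → ℕ := fun S => if S = {0} then 1 else if S = {1} then 0 else 2

def ftab3 : Finset (Fin 3) → ℕ := fun S =>
  if S = {0,1} then 2 else if S = {0,2} then 1 else if S = {1,2} then 0
  else if S = (∅ : Finset (Fin 3)) then 3 else if S = {0} then 4 else if S = {1} then 5 else 6

def ftab4 : Finset (Fin 4) → ℕ := fun S =>
  if S = {0} ∨ S = {0,1} then 5 else if S = {0,2} then 6 else if S = {0,3} then 7
  else if S = {3} ∨ S = {2,3} then 1 else if S = {1,3} then 2 else 0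

def ftab5 : Finset (Fin 5) → ℕ := fun S =>
  if S.card = 2 then (if (0 : Fin 5) ∈ S then 5 else if (1 : Fin 5) ∈ S then 6 else 7) else 8

lemma Db2 : ∀ S : Finset (Fin 2), ftab2 S < 2 + 4 := by decide
lemma Db3 : ∀ S : Finset (Fin 3), ftab3 S < 3 + 4 := by decide
lemma Db4 : ∀ S : Finset (Fin 4), ftab4 S < 4 + 4 := by decide
lemma Db5 : ∀ S : Finset (Fin 5), ftab5 S < 5 + 4 := by decide

lemma D1_2 : ∀ S : Finset (Fin 2), S ≠ Finset.univ → S.card ≤ 2 →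
    ∀ i ∈ S, ftab2 S ≠ i.val := by decide
lemma D1_3 : ∀ S : Finset (Fin 3), S ≠ Finset.univ → S.card ≤ 2 →
    ∀ i ∈ S, ftab3 S ≠ i.val := by decide
lemma D1_4 : ∀ S : Finset (Fin 4), S ≠ Finset.univ → S.card ≤ 2 →
    ∀ i ∈ S, ftab4 S ≠ i.val := by decide
lemma D1_5 : ∀ S : Finset (Fin 5), S ≠ Finset.univ → S.card ≤ 2 →
    ∀ i ∈ S, ftab5 S ≠ i.val := by decide

lemma D2_2 : ∀ S T : Finset (Fin 2), S ≠ Finset.univ → T ≠ Finset.univ →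
    S.card ≤ 2 → T.card ≤ 2 → (Finset.univ \ (S ∪ T)).card ≤ 1 → (S ∩ T).card + 2 ≤ 2 →
    ftab2 S ≠ ftab2 T := by decide
lemma D2_3 : ∀ S T : Finset (Fin 3), S ≠ Finset.univ → T ≠ Finset.univ →
    S.card ≤ 2 → T.card ≤ 2 → (Finset.univ \ (S ∪ T)).card ≤ 1 → (S ∩ T).card + 2 ≤ 3 →
    ftab3 S ≠ ftab3 T := by decide
lemma D2_4 : ∀ S T : Finset (Fin 4), S ≠ Finset.univ → T ≠ Finset.univ →
    S.card ≤ 2 → T.card ≤ 2 → (Finset.univ \ (S ∪ T)).card ≤ 1 → (S ∩ T).card + 2 ≤ 4 →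
    ftab4 S ≠ ftab4 T := by decide
lemma D2_5 : ∀ S T : Finset (Fin 5), S ≠ Finset.univ → T ≠ Finset.univ →
    S.card ≤ 2 → T.card ≤ 2 → (Finset.univ \ (S ∪ T)).card ≤ 1 → (S ∩ T).card + 2 ≤ 5 →
    ftab5 S ≠ ftab5 T := by decide

lemma main_aux {V : Type*} [Fintype V] {G : SimpleGraph V}
    (h1 : IndFree graph2K2 G) (h2 : IndFree graphK5e G)
    (k : ℕ) (s : Finset V) (hscl : G.IsClique (s : Set V)) (hcard : s.card = k)
    (hmax : ∀ t : Finset V, G.IsClique (t : Set V) → t.card ≤ k) :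
    G.Colorable (k + 4) := by
  classical
  revert hscl hcard hmax
  rcases k with _|_|_|_|_|_|m <;> intro hscl hcard hmax <;>
    obtain ⟨v, hinj, hmem, hsurj, hadjv⟩ :=
      exists_enum (G := G) (s := s) ⟨hscl, hcard⟩
  -- k = 0
  · have hno : ∀ u w : V, ¬G.Adj u w := by
      intro u w hadj
      have hcl : G.IsClique (({u, w} : Finset V) : Set V) := by
        rw [Finset.coe_pair]
        exact SimpleGraph.isClique_pair.mpr (fun _ => hadj)
      have := hmax _ hcl
      rw [Finset.card_pair hadj.ne] at this
      omega
    exact ⟨Coloring.mk (fun _ => ⟨0, by norm_num⟩) (fun {u w} h => absurd h (hno u w))⟩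
  -- k = 1
  · have hno : ∀ u w : V, ¬G.Adj u w := by
      intro u w hadj
      have hcl : G.IsClique (({u, w} : Finset V) : Set V) := by
        rw [Finset.coe_pair]
        exact SimpleGraph.isClique_pair.mpr (fun _ => hadj)
      have := hmax _ hcl
      rw [Finset.card_pair hadj.ne] at this
      omega
    exact ⟨Coloring.mk (fun _ => ⟨0, by norm_num⟩) (fun {u w} h => absurd h (hno u w))⟩
  -- k = 2
  · refine assemble v hsurj ftab2 (by norm_num) (fun u _ => Db2 _) ?_ ?_
    · intro u hu i hi
      exact D1_2 _ (fun h => notall hmax hscl hcard hsurj hu h)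
        (trace2 h2 hmax hscl hcard hmem hsurj hadjv hu) i hi
    · intro u w hu hw hadj
      exact D2_2 _ _ (fun h => notall hmax hscl hcard hsurj hu h)
        (fun h => notall hmax hscl hcard hsurj hw h)
        (trace2 h2 hmax hscl hcard hmem hsurj hadjv hu)
        (trace2 h2 hmax hscl hcard hmem hsurj hadjv hw)
        (union_big h1 hadjv hadj)
        (inter_small hmax hinj hmem hadjv hu hw hadj)
  -- k = 3
  · refine assemble v hsurj ftab3 (by norm_num) (fun u _ => Db3 _) ?_ ?_
    · intro u hu i hi
      exact D1_3 _ (fun h => notall hmax hscl hcard hsurj hu h)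
        (trace2 h2 hmax hscl hcard hmem hsurj hadjv hu) i hi
    · intro u w hu hw hadj
      exact D2_3 _ _ (fun h => notall hmax hscl hcard hsurj hu h)
        (fun h => notall hmax hscl hcard hsurj hw h)
        (trace2 h2 hmax hscl hcard hmem hsurj hadjv hu)
        (trace2 h2 hmax hscl hcard hmem hsurj hadjv hw)
        (union_big h1 hadjv hadj)
        (inter_small hmax hinj hmem hadjv hu hw hadj)
  -- k = 4
  · refine assemble v hsurj ftab4 (by norm_num) (fun u _ => Db4 _) ?_ ?_
    · intro u hu i hi
      exact D1_4 _ (fun h => notall hmax hscl hcard hsurj hu h)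
        (trace2 h2 hmax hscl hcard hmem hsurj hadjv hu) i hi
    · intro u w hu hw hadj
      exact D2_4 _ _ (fun h => notall hmax hscl hcard hsurj hu h)
        (fun h => notall hmax hscl hcard hsurj hw h)
        (trace2 h2 hmax hscl hcard hmem hsurj hadjv hu)
        (trace2 h2 hmax hscl hcard hmem hsurj hadjv hw)
        (union_big h1 hadjv hadj)
        (inter_small hmax hinj hmem hadjv hu hw hadj)
  -- k = 5
  · refine assemble v hsurj ftab5 (by norm_num) (fun u _ => Db5 _) ?_ ?_
    · intro u hu i hi
      exact D1_5 _ (fun h => notall hmax hscl hcard hsurj hu h)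
        (trace2 h2 hmax hscl hcard hmem hsurj hadjv hu) i hi
    · intro u w hu hw hadj
      exact D2_5 _ _ (fun h => notall hmax hscl hcard hsurj hu h)
        (fun h => notall hmax hscl hcard hsurj hw h)
        (trace2 h2 hmax hscl hcard hmem hsurj hadjv hu)
        (trace2 h2 hmax hscl hcard hmem hsurj hadjv hw)
        (union_big h1 hadjv hadj)
        (inter_small hmax hinj hmem hadjv hu hw hadj)
  -- k = m + 6
  · refine assemble v hsurj (fun _ => m + 6) (by omega) (fun u _ => by exact Nat.lt_add_of_pos_right (by norm_num)) ?_ ?_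
    · intro u hu i hi
      have := i.isLt
      show m + 6 ≠ i.val
      omega
    · intro u w hu hw hadj
      exfalso
      have hU := union_big h1 hadjv (v := v) hadj
      have hu2 := trace2 h2 hmax hscl hcard hmem hsurj hadjv hu
      have hw2 := trace2 h2 hmax hscl hcard hmem hsurj hadjv hw
      have hsd : (Finset.univ \ (traceF G v u ∪ traceF G v w)).card =
          (m + 6) - (traceF G v u ∪ traceF G v w).card := by
        rw [Finset.card_sdiff_of_subset (Finset.subset_univ _), Finset.card_univ, Fintype.card_fin]
      have hun : (traceF G v u ∪ traceF G v w).card ≤ 4 :=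
        le_trans (Finset.card_union_le _ _) (by omega)
      omega

end Aux

/-- Every `(2K₂, K₅ - e)`-free graph `G` satisfies `χ(G) ≤ ω(G) + 4`. -/
theorem stmt9 {V : Type*} [Fintype V] (G : SimpleGraph V)
    (h1 : IndFree graph2K2 G) (h2 : IndFree graphK5e G) :
    G.chromaticNumber ≤ ((G.cliqueNum + 4 : ℕ) : ℕ∞) := by
  classical
  obtain ⟨s, hs⟩ := G.exists_isNClique_cliqueNum
  have hmax : ∀ t : Finset V, G.IsClique (t : Set V) → t.card ≤ G.cliqueNum :=
    fun t ht => SimpleGraph.IsClique.card_le_cliqueNum (tc := ht)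
  exact (main_aux h1 h2 G.cliqueNum s hs.isClique hs.card_eq hmax).chromaticNumber_le
end

section
/- Let G be a (P4 ∪ K1)-free graph containing an induced cycle C of length 5. Then every vertex of G not on C is adjacent to at least two vertices of C. In particular, if G is a (P4 ∪ K1, C4)-free graph containing an induced 5-cycle, then G is connected. -/
open SimpleGraph

instance : DecidableRel graphP4K1.Adj := fun a b =>
  decidable_of_iff' _ (SimpleGraph.fromRel_adj _ a b)

set_option maxHeartbeats 1600000 in
/-- In a `(P₄ ∪ K₁)`-free graph containing an induced 5-cycle `C`,
every vertex off `C` has at least two neighbors on `C`; in particular a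
`(P₄ ∪ K₁, C₄)`-free graph containing an induced 5-cycle is connected. -/
theorem stmt16 {V : Type*} [Fintype V] (G : SimpleGraph V)
    (hfree : IndFree graphP4K1 G)
    (v : Fin 5 → V) (hinj : Function.Injective v)
    (hadj : ∀ i : Fin 5, G.Adj (v i) (v (i + 1)))
    (hnadj : ∀ i : Fin 5, ¬ G.Adj (v i) (v (i + 2))) :
    (∀ x : V, (∀ i : Fin 5, x ≠ v i) →
      ∃ i j : Fin 5, i ≠ j ∧ G.Adj x (v i) ∧ G.Adj x (v j)) ∧
    (IndFree graphC4 G → G.Connected) := by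
  have key : ∀ x : V, (∀ i : Fin 5, x ≠ v i) →
      ∃ i j : Fin 5, i ≠ j ∧ G.Adj x (v i) ∧ G.Adj x (v j) := by
    intro x hx
    by_contra hcon
    push_neg at hcon
    have hk : ∃ k : Fin 5, ∀ i, i ≠ k → ¬ G.Adj x (v i) := by
      by_cases h : ∃ k, G.Adj x (v k)
      · obtain ⟨k, hka⟩ := h
        exact ⟨k, fun i hi ha => hcon k i (fun e => hi e.symm) hka ha⟩
      · push_neg at h
        exact ⟨0, fun i _ => h i⟩
    obtain ⟨k, hk⟩ := hk
    have e1 : k + 1 + 1 = k + 2 := by open Fin.CommRing in ring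
    have e2 : k + 2 + 1 = k + 3 := by open Fin.CommRing in ring
    have e3 : k + 3 + 1 = k + 4 := by open Fin.CommRing in ring
    have e4 : k + 1 + 2 = k + 3 := by open Fin.CommRing in ring
    have e5 : k + 2 + 2 = k + 4 := by open Fin.CommRing in ring
    have e6 : ∀ m : Fin 5, m + 4 + 2 = m + 1 := by decide
    have h12 : G.Adj (v (k+1)) (v (k+2)) := by have := hadj (k+1); rwa [e1] at this
    have h23 : G.Adj (v (k+2)) (v (k+3)) := by have := hadj (k+2); rwa [e2] at this
    have h34 : G.Adj (v (k+3)) (v (k+4)) := by have := hadj (k+3); rwa [e3] at this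
    have n13 : ¬ G.Adj (v (k+1)) (v (k+3)) := by have := hnadj (k+1); rwa [e4] at this
    have n24 : ¬ G.Adj (v (k+2)) (v (k+4)) := by have := hnadj (k+2); rwa [e5] at this
    have n14 : ¬ G.Adj (v (k+1)) (v (k+4)) := by
      have := hnadj (k+4); rw [e6 k] at this
      exact fun h => this h.symm
    have hne : ∀ m : Fin 5, m ≠ 0 → k + m ≠ k := by
      intro m hm e
      apply hm
      have : k + m = k + 0 := by simpa using e
      exact add_left_cancel this
    have nx : ∀ m : Fin 5, m ≠ 0 → ¬ G.Adj x (v (k + m)) := by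
      intro m hm
      exact hk _ (hne m hm)
    have nx1 := nx 1 (by decide)
    have nx2 := nx 2 (by decide)
    have nx3 := nx 3 (by decide)
    have nx4 := nx 4 (by decide)
    have hvne : ∀ i j : Fin 5, i ≠ j → v i ≠ v j := fun i j hij e => hij (hinj e)
    have xne : ∀ i : Fin 5, x ≠ v i := hx
    have dab : ∀ m n : Fin 5, m ≠ n → v (k + m) ≠ v (k + n) :=
      fun m n h => hvne _ _ (fun e => h (add_left_cancel e))
    refine hfree.false ⟨⟨![v (k+1), v (k+2), v (k+3), v (k+4), x], ?_⟩, ?_⟩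
    · intro a b hab
      fin_cases a <;> fin_cases b <;>
        simp only [Matrix.cons_val_zero, Matrix.cons_val_one, Matrix.head_cons,
          Matrix.cons_val_two, Matrix.tail_cons, Matrix.cons_val_three,
          Matrix.cons_val_four] at hab <;>
        first
        | rfl
        | exact absurd hab (dab _ _ (by decide))
        | exact absurd hab.symm (xne _)
        | exact absurd hab (xne _)
    · intro a b
      fin_cases a <;> fin_cases b <;>
        simp only [Matrix.cons_val_zero, Matrix.cons_val_one, Matrix.head_cons,
          Matrix.cons_val_two, Matrix.tail_cons, Matrix.cons_val_three,
          Matrix.cons_val_four] <;>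
        first
        | exact iff_of_false (G.irrefl) (by decide)
        | exact iff_of_true h12 (by decide)
        | exact iff_of_true h12.symm (by decide)
        | exact iff_of_true h23 (by decide)
        | exact iff_of_true h23.symm (by decide)
        | exact iff_of_true h34 (by decide)
        | exact iff_of_true h34.symm (by decide)
        | exact iff_of_false n13 (by decide)
        | exact iff_of_false (fun h => n13 h.symm) (by decide)
        | exact iff_of_false n24 (by decide)
        | exact iff_of_false (fun h => n24 h.symm) (by decide)
        | exact iff_of_false n14 (by decide)
        | exact iff_of_false (fun h => n14 h.symm) (by decide)
        | exact iff_of_false nx1 (by decide)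
        | exact iff_of_false (fun h => nx1 h.symm) (by decide)
        | exact iff_of_false nx2 (by decide)
        | exact iff_of_false (fun h => nx2 h.symm) (by decide)
        | exact iff_of_false nx3 (by decide)
        | exact iff_of_false (fun h => nx3 h.symm) (by decide)
        | exact iff_of_false nx4 (by decide)
        | exact iff_of_false (fun h => nx4 h.symm) (by decide)
  refine ⟨key, fun _ => ?_⟩
  rw [connected_iff]
  refine ⟨?_, ⟨v 0⟩⟩
  have rc : ∀ i : Fin 5, G.Reachable (v i) (v 0) := by
    have r : ∀ i : Fin 5, G.Reachable (v i) (v (i+1)) := fun i => (hadj i).reachable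
    intro i
    fin_cases i
    · rfl
    · have := (r 1).trans ((r 2).trans ((r 3).trans (r 4)))
      simpa using this
    · have := (r 2).trans ((r 3).trans (r 4))
      simpa using this
    · have := (r 3).trans (r 4)
      simpa using this
    · simpa using r 4
  have rall : ∀ u : V, G.Reachable u (v 0) := by
    intro u
    by_cases h : ∃ i, u = v i
    · obtain ⟨i, rfl⟩ := h; exact rc i
    · push_neg at h
      obtain ⟨i, j, _, ha, _⟩ := key u h
      exact ha.reachable.trans (rc i)
  exact fun u w => (rall u).trans (rall w).symm
end
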